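/- arXiv:0901.2993 — 2 statements merged into one kernel-verified Lean document; each statement's English description precedes it below -/
import Mathlib

section
/- For every p ∈ (1,2) and all real numbers u, v > 0, the p-th moment of each coordinate under the harmonic measure dominates the p-th power of the starting coordinate: ∫ y₁^p Q_{(u,v)}(dy) ≥ u^p and ∫ y₂^p Q_{(u,v)}(dy) ≥ v^p. -/
open MeasureTheory Real Set
open Filter Topology
open scoped ENNReal NNReal

noncomputable def Qdens (u v t : ℝ) : ℝ :=
  (4 / π) * (u * v * t) / (4 * u ^ 2 * v ^ 2 + (t ^ 2 + v ^ 2 - u ^ 2) ^ 2)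

/-- The harmonic measure `Q_x` of planar Brownian motion started at `x ∈ [0,∞)²` and
stopped upon leaving the open quadrant `(0,∞)²`; for boundary points it is `δ_x`. -/
noncomputable def Qmeas (x : ℝ × ℝ) : Measure (ℝ × ℝ) :=
  if 0 < x.1 ∧ 0 < x.2 then
    Measure.map (fun t => (t, (0 : ℝ)))
      ((volume.restrict (Ioi (0 : ℝ))).withDensity fun t => ENNReal.ofReal (Qdens x.1 x.2 t))
    + Measure.map (fun t => ((0 : ℝ), t))
      ((volume.restrict (Ioi (0 : ℝ))).withDensity fun t => ENNReal.ofReal (Qdens x.2 x.1 t))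
  else Measure.dirac x

section Aux

variable {p u v w z : ℝ}


lemma Qdens_denom_pos (hu : 0 < u) (hv : 0 < v) (t : ℝ) :
    0 < 4 * u ^ 2 * v ^ 2 + (t ^ 2 + v ^ 2 - u ^ 2) ^ 2 := by positivity

lemma Qdens_eq (hu : 0 < u) (hv : 0 < v) (t : ℝ) :
    Qdens u v t = (1 / π) * (v / ((t - u) ^ 2 + v ^ 2) - v / ((t + u) ^ 2 + v ^ 2)) := by
  have hA : (0:ℝ) < (t - u) ^ 2 + v ^ 2 := by positivity
  have hB : (0:ℝ) < (t + u) ^ 2 + v ^ 2 := by positivity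
  have hD := Qdens_denom_pos hu hv t
  have hπ := Real.pi_pos
  unfold Qdens
  field_simp
  ring

lemma Qdens_nonneg (hu : 0 < u) (hv : 0 < v) {t : ℝ} (ht : 0 ≤ t) : 0 ≤ Qdens u v t := by
  unfold Qdens
  have hπ := Real.pi_pos
  positivity

lemma hasDerivAt_arctan_aff (hv : 0 < v) (s t : ℝ) :
    HasDerivAt (fun t => arctan ((t + s) / v)) (v / ((t + s) ^ 2 + v ^ 2)) t := by
  have h1 : HasDerivAt (fun t : ℝ => (t + s) / v) (1 / v) t := by
    simpa using ((hasDerivAt_id t).add_const s).div_const v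
  have h2 := (Real.hasDerivAt_arctan ((t + s) / v)).comp t h1
  refine h2.congr_deriv ?_
  have : (t+s)^2/v^2 + 1 = ((t+s)^2+v^2)/v^2 := by field_simp
  field_simp
  ring

lemma hasDerivAt_log_aff (hv : 0 < v) (s t : ℝ) :
    HasDerivAt (fun t => Real.log ((t + s) ^ 2 + v ^ 2)) (2 * (t + s) / ((t + s) ^ 2 + v ^ 2)) t := by
  have hA : (0:ℝ) < (t + s) ^ 2 + v ^ 2 := by positivity
  have h1 : HasDerivAt (fun t : ℝ => (t + s) ^ 2 + v ^ 2) (2 * (t + s)) t := by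
    simpa using (((hasDerivAt_id t).add_const s).pow 2).add_const (v ^ 2)
  have h2 := (Real.hasDerivAt_log (ne_of_gt hA)).comp t h1
  refine h2.congr_deriv ?_
  field_simp

/-- Antiderivative of `Qdens u v`. -/
noncomputable def G0 (u v t : ℝ) : ℝ :=
  (1 / π) * (arctan ((t + -u) / v) - arctan ((t + u) / v))

/-- Antiderivative of `t * Qdens u v t`. -/
noncomputable def G1 (u v t : ℝ) : ℝ :=
  (1 / π) * (v / 2 * (Real.log ((t + -u) ^ 2 + v ^ 2) - Real.log ((t + u) ^ 2 + v ^ 2))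
    + u * (arctan ((t + -u) / v) + arctan ((t + u) / v)))

lemma hasDerivAt_G0 (hu : 0 < u) (hv : 0 < v) (t : ℝ) :
    HasDerivAt (G0 u v) (Qdens u v t) t := by
  have h := ((hasDerivAt_arctan_aff hv (-u) t).sub (hasDerivAt_arctan_aff hv u t)).const_mul (1/π)
  refine h.congr_deriv ?_
  rw [Qdens_eq hu hv]
  ring_nf

lemma hasDerivAt_G1 (hu : 0 < u) (hv : 0 < v) (t : ℝ) :
    HasDerivAt (G1 u v) (t * Qdens u v t) t := by
  have hA : (0:ℝ) < (t + -u) ^ 2 + v ^ 2 := by positivity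
  have hB : (0:ℝ) < (t + u) ^ 2 + v ^ 2 := by positivity
  have h := ((((hasDerivAt_log_aff hv (-u) t).sub (hasDerivAt_log_aff hv u t)).const_mul (v/2)).add
    (((hasDerivAt_arctan_aff hv (-u) t).add (hasDerivAt_arctan_aff hv u t)).const_mul u)).const_mul (1/π)
  refine h.congr_deriv ?_
  rw [Qdens_eq hu hv]
  have h1 : t - u = t + -u := by ring
  rw [h1]
  field_simp
  ring

lemma tendsto_aff_atTop (hv : 0 < v) (s : ℝ) :
    Tendsto (fun t : ℝ => (t + s) / v) atTop atTop :=
  (tendsto_atTop_add_const_right atTop s tendsto_id).atTop_div_const hv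

lemma tendsto_arctan_aff (hv : 0 < v) (s : ℝ) :
    Tendsto (fun t : ℝ => arctan ((t + s) / v)) atTop (𝓝 (π / 2)) :=
  (tendsto_nhds_of_tendsto_nhdsWithin tendsto_arctan_atTop).comp (tendsto_aff_atTop hv s)

lemma tendsto_log_diff (u : ℝ) (hv : 0 < v) :
    Tendsto (fun t : ℝ => Real.log ((t + -u) ^ 2 + v ^ 2) - Real.log ((t + u) ^ 2 + v ^ 2))
      atTop (𝓝 0) := by
  have hq : Tendsto (fun t : ℝ => ((t + -u) ^ 2 + v ^ 2) / ((t + u) ^ 2 + v ^ 2)) atTop (𝓝 1) := by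
    have h0 : Tendsto (fun t : ℝ => t⁻¹) atTop (𝓝 (0:ℝ)) := tendsto_inv_atTop_zero
    have key : ∀ s : ℝ, Tendsto (fun t : ℝ => (1 + s * t⁻¹) ^ 2 + (v * t⁻¹) ^ 2) atTop (𝓝 1) := by
      intro s
      have h := (((tendsto_const_nhds (x := (1:ℝ)))).add (h0.const_mul s)).pow 2 |>.add ((h0.const_mul v).pow 2)
      simpa using h
    have hdiv := (key (-u)).div (key u) one_ne_zero
    rw [div_one] at hdiv
    refine hdiv.congr' ?_
    filter_upwards [eventually_gt_atTop (0:ℝ)] with t ht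
    have ht' : t ≠ 0 := ne_of_gt ht
    have h1 : ((1:ℝ) + u * t⁻¹) ^ 2 + (v * t⁻¹) ^ 2 ≠ 0 := by positivity
    have h2 : ((t + u) ^ 2 + v ^ 2) ≠ 0 := by positivity
    show ((1 + -u * t⁻¹) ^ 2 + (v * t⁻¹) ^ 2) / ((1 + u * t⁻¹) ^ 2 + (v * t⁻¹) ^ 2)
      = ((t + -u) ^ 2 + v ^ 2) / ((t + u) ^ 2 + v ^ 2)
    rw [div_eq_div_iff h1 h2]
    field_simp
  have hlog : Tendsto (fun t : ℝ => Real.log (((t + -u) ^ 2 + v ^ 2) / ((t + u) ^ 2 + v ^ 2)))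
      atTop (𝓝 0) := by
    have := (Real.continuousAt_log (x := 1) one_ne_zero).tendsto.comp hq
    simpa [Function.comp_def] using this
  refine hlog.congr' ?_
  filter_upwards [eventually_gt_atTop (0:ℝ)] with t ht
  rw [Real.log_div (by positivity) (by positivity)]

lemma tendsto_G0 (hv : 0 < v) : Tendsto (G0 u v) atTop (𝓝 0) := by
  have h := ((tendsto_arctan_aff hv (-u)).sub (tendsto_arctan_aff hv u)).const_mul (1/π)
  have e : (1/π) * (π/2 - π/2) = (0:ℝ) := by ring
  rw [e] at h
  exact h

lemma tendsto_G1 (hu : 0 < u) (hv : 0 < v) : Tendsto (G1 u v) atTop (𝓝 u) := by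
  have h := (((tendsto_log_diff u hv).const_mul (v/2)).add
    (((tendsto_arctan_aff hv (-u)).add (tendsto_arctan_aff hv u)).const_mul u)).const_mul (1/π)
  have hπ := Real.pi_ne_zero
  have e : (1/π) * (v/2 * 0 + u * (π/2 + π/2)) = u := by field_simp; ring
  rw [e] at h
  exact h

lemma integrableOn_Qdens (hu : 0 < u) (hv : 0 < v) : IntegrableOn (Qdens u v) (Ioi 0) :=
  integrableOn_Ioi_deriv_of_nonneg' (fun x _ => hasDerivAt_G0 hu hv x)
    (fun x hx => Qdens_nonneg hu hv (le_of_lt hx)) (tendsto_G0 hv)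

lemma integral_Qdens (hu : 0 < u) (hv : 0 < v) :
    ∫ t in Ioi 0, Qdens u v t = 2/π * arctan (u/v) := by
  rw [integral_Ioi_of_hasDerivAt_of_nonneg' (fun x _ => hasDerivAt_G0 hu hv x)
    (fun x hx => Qdens_nonneg hu hv (le_of_lt hx)) (tendsto_G0 hv)]
  simp [G0, neg_div, Real.arctan_neg]
  ring

lemma integrableOn_id_Qdens (hu : 0 < u) (hv : 0 < v) :
    IntegrableOn (fun t => t * Qdens u v t) (Ioi 0) :=
  integrableOn_Ioi_deriv_of_nonneg' (fun x _ => hasDerivAt_G1 hu hv x)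
    (fun x hx => mul_nonneg (le_of_lt hx) (Qdens_nonneg hu hv (le_of_lt hx))) (tendsto_G1 hu hv)

lemma integral_id_Qdens (hu : 0 < u) (hv : 0 < v) :
    ∫ t in Ioi 0, t * Qdens u v t = u := by
  rw [integral_Ioi_of_hasDerivAt_of_nonneg' (fun x _ => hasDerivAt_G1 hu hv x)
    (fun x hx => mul_nonneg (le_of_lt hx) (Qdens_nonneg hu hv (le_of_lt hx))) (tendsto_G1 hu hv)]
  simp [G1, neg_div, Real.arctan_neg, neg_sq]

lemma Qdens_continuous (hu : 0 < u) (hv : 0 < v) : Continuous (Qdens u v) := by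
  apply Continuous.div
  · fun_prop
  · fun_prop
  · intro t
    have : (0:ℝ) < 4 * u ^ 2 * v ^ 2 + (t ^ 2 + v ^ 2 - u ^ 2) ^ 2 := by positivity
    exact ne_of_gt this

lemma rpow_Qdens_integrableOn (hp1 : 1 < p) (hp2 : p < 2) (hu : 0 < u) (hv : 0 < v) :
    IntegrableOn (fun t => t ^ p * Qdens u v t) (Ioi 0) := by
  have hπ := Real.pi_pos
  have hm : Measurable (fun t : ℝ => t ^ p * Qdens u v t) :=
    ((Real.continuous_rpow_const (by linarith : (0:ℝ) ≤ p)).mul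
      (Qdens_continuous hu hv)).measurable
  set T : ℝ := 2 * u + 1 with hT
  have hT0 : (0:ℝ) < T := by positivity
  have hT1 : (1:ℝ) ≤ T := by nlinarith
  have hsplit : Ioi (0:ℝ) = Ioc 0 T ∪ Ioi T := (Ioc_union_Ioi_eq_Ioi hT0.le).symm
  rw [hsplit]
  apply IntegrableOn.union
  · -- bounded on Ioc 0 T
    have hC : ∀ t ∈ Ioc (0:ℝ) T, ‖t ^ p * Qdens u v t‖ ≤ T ^ (p + 1) / (π * u * v) := by
      intro t ht
      obtain ⟨ht0, htT⟩ := ht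
      have hQ := Qdens_nonneg hu hv ht0.le
      have htp : (0:ℝ) ≤ t ^ p := rpow_nonneg ht0.le p
      rw [Real.norm_eq_abs, abs_of_nonneg (mul_nonneg htp hQ)]
      have h1 : Qdens u v t ≤ (4 / π) * (u * v * t) / (4 * u ^ 2 * v ^ 2) := by
        unfold Qdens
        apply div_le_div_of_nonneg_left (by positivity) (by positivity)
        nlinarith [sq_nonneg (t ^ 2 + v ^ 2 - u ^ 2)]
      have h2 : t ^ p * Qdens u v t ≤ t ^ p * ((4 / π) * (u * v * t) / (4 * u ^ 2 * v ^ 2)) :=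
        mul_le_mul_of_nonneg_left h1 htp
      have h3 : t ^ p * ((4 / π) * (u * v * t) / (4 * u ^ 2 * v ^ 2)) = t ^ p * t / (π * u * v) := by
        field_simp
      have h4 : t ^ p * t = t ^ (p + 1) := by
        rw [Real.rpow_add_one (ne_of_gt ht0)]
      have h5 : t ^ (p + 1) ≤ T ^ (p + 1) := Real.rpow_le_rpow ht0.le htT (by linarith)
      calc t ^ p * Qdens u v t ≤ t ^ p * t / (π * u * v) := by rw [← h3]; exact h2
        _ = t ^ (p + 1) / (π * u * v) := by rw [h4]
        _ ≤ T ^ (p + 1) / (π * u * v) := by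
            apply div_le_div_of_nonneg_right h5 (by positivity) |>.trans_eq rfl
    have hconst : IntegrableOn (fun _ : ℝ => T ^ (p + 1) / (π * u * v)) (Ioc 0 T) :=
      integrableOn_const measure_Ioc_lt_top.ne
    refine Integrable.mono' hconst ?_ ?_
    · exact hm.aestronglyMeasurable
    · rw [ae_restrict_iff' measurableSet_Ioc]
      exact Filter.Eventually.of_forall hC
  · -- tail: dominated by (16 u v / π) * t ^ (p - 3)
    have hC : ∀ t ∈ Ioi T, ‖t ^ p * Qdens u v t‖ ≤ (16 * u * v / π) * t ^ (p - 3) := by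
      intro t ht
      have htT : T < t := ht
      have ht0 : (0:ℝ) < t := lt_trans hT0 htT
      have hQ := Qdens_nonneg hu hv ht0.le
      have htp : (0:ℝ) ≤ t ^ p := rpow_nonneg ht0.le p
      rw [Real.norm_eq_abs, abs_of_nonneg (mul_nonneg htp hQ)]
      have hts : t ^ (p - 3) = t ^ p / t ^ (3:ℕ) := by
        rw [show (p - 3) = p - (3:ℕ) by norm_num, Real.rpow_sub ht0, Real.rpow_natCast]
      rw [hts]
      have key : Qdens u v t ≤ (16 * u * v / π) / t ^ (3:ℕ) := by
        unfold Qdens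
        rw [div_le_div_iff₀ (by positivity) (by positivity)]
        have h2u : 2 * u < t := by nlinarith
        have hu2 : u ^ 2 ≤ t ^ 2 / 4 := by nlinarith
        have h3 : 3 / 4 * t ^ 2 ≤ t ^ 2 + v ^ 2 - u ^ 2 := by nlinarith [sq_nonneg v]
        have h4 : (3 / 4 * t ^ 2) ^ 2 ≤ (t ^ 2 + v ^ 2 - u ^ 2) ^ 2 :=
          pow_le_pow_left₀ (by positivity) h3 2
        have hden : t ^ 4 ≤ 4 * (4 * u ^ 2 * v ^ 2 + (t ^ 2 + v ^ 2 - u ^ 2) ^ 2) := by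
          nlinarith [sq_nonneg (u * v)]
        have hc : 0 < u * v / π := by positivity
        have h5 := mul_le_mul_of_nonneg_left hden hc.le
        have e1 : 4 / π * (u * v * t) * t ^ 3 = 4 * (u * v / π * t ^ 4) := by ring
        have e2 : 16 * u * v / π * (4 * u ^ 2 * v ^ 2 + (t ^ 2 + v ^ 2 - u ^ 2) ^ 2)
            = 4 * (u * v / π * (4 * (4 * u ^ 2 * v ^ 2 + (t ^ 2 + v ^ 2 - u ^ 2) ^ 2))) := by ring
        rw [e1, e2]
        linarith [h5]
      calc t ^ p * Qdens u v t ≤ t ^ p * ((16 * u * v / π) / t ^ (3:ℕ)) :=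
            mul_le_mul_of_nonneg_left key htp
        _ = 16 * u * v / π * (t ^ p / t ^ (3:ℕ)) := by ring
    have hint : IntegrableOn (fun t : ℝ => (16 * u * v / π) * t ^ (p - 3)) (Ioi T) :=
      (integrableOn_Ioi_rpow_of_lt (by linarith) hT0).const_mul _
    refine Integrable.mono' hint ?_ ?_
    · exact hm.aestronglyMeasurable
    · rw [ae_restrict_iff' measurableSet_Ioi]
      exact Filter.Eventually.of_forall hC

lemma moment_lower (hp1 : 1 < p) (hp2 : p < 2) (hu : 0 < u) (hv : 0 < v) :
    u ^ p ≤ ∫ t in Ioi 0, t ^ p * Qdens u v t := by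
  have hπ := Real.pi_pos
  set m : ℝ := 2/π * arctan (u/v) with hm
  have harc : 0 < arctan (u/v) := by
    rw [← Real.arctan_zero]
    exact Real.arctan_strictMono (div_pos hu hv)
  have hm0 : 0 < m := by rw [hm]; positivity
  have hm1 : m ≤ 1 := by
    have h := (Real.arctan_lt_pi_div_two (u/v)).le
    have h2 : 2/π * arctan (u/v) ≤ 2/π * (π/2) := by
      apply mul_le_mul_of_nonneg_left h (by positivity)
    rw [hm]
    calc 2/π * arctan (u/v) ≤ 2/π * (π/2) := h2
      _ = 1 := by field_simp
  set c : ℝ := u / m with hc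
  have hc0 : 0 < c := div_pos hu hm0
  have hcm : c * m = u := div_mul_cancel₀ u (ne_of_gt hm0)
  have tangent : ∀ t : ℝ, 0 ≤ t → c ^ p + p * c ^ (p - 1) * (t - c) ≤ t ^ p := by
    intro t ht
    have hs : -1 ≤ t / c - 1 := by
      have : 0 ≤ t / c := div_nonneg ht hc0.le
      linarith
    have hb := one_add_mul_self_le_rpow_one_add hs hp1.le
    have h1 : (1 + (t/c - 1)) = t / c := by ring
    rw [h1] at hb
    have h2 := mul_le_mul_of_nonneg_left hb (Real.rpow_nonneg hc0.le p)
    have h3 : c ^ p * (t / c) ^ p = t ^ p := by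
      rw [← Real.mul_rpow hc0.le (div_nonneg ht hc0.le), mul_div_cancel₀ _ (ne_of_gt hc0)]
    rw [h3] at h2
    have h4 : c ^ p * (1 + p * (t / c - 1)) = c ^ p + p * c ^ (p - 1) * (t - c) := by
      rw [Real.rpow_sub_one (ne_of_gt hc0)]
      field_simp
    linarith [h4 ▸ h2]
  have hQint := integrableOn_Qdens hu hv
  have hQint1 := integrableOn_id_Qdens hu hv
  have hle : ∫ t in Ioi 0, ((c ^ p - p * c ^ (p-1) * c) * Qdens u v t
        + (p * c ^ (p-1)) * (t * Qdens u v t))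
      ≤ ∫ t in Ioi 0, t ^ p * Qdens u v t := by
    apply setIntegral_mono_on ((hQint.const_mul _).add (hQint1.const_mul _))
      (rpow_Qdens_integrableOn hp1 hp2 hu hv) measurableSet_Ioi
    intro t ht
    have ht0 : (0:ℝ) < t := ht
    have hQ := Qdens_nonneg hu hv ht0.le
    have key := mul_le_mul_of_nonneg_right (tangent t ht0.le) hQ
    calc (c ^ p - p * c ^ (p-1) * c) * Qdens u v t + (p * c ^ (p-1)) * (t * Qdens u v t)
        = (c ^ p + p * c ^ (p-1) * (t - c)) * Qdens u v t := by ring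
      _ ≤ t ^ p * Qdens u v t := key
  have hlhs : ∫ t in Ioi 0, ((c ^ p - p * c ^ (p-1) * c) * Qdens u v t
        + (p * c ^ (p-1)) * (t * Qdens u v t)) = c ^ p * m := by
    rw [integral_add (hQint.const_mul _) (hQint1.const_mul _), MeasureTheory.integral_const_mul,
      MeasureTheory.integral_const_mul, integral_Qdens hu hv, integral_id_Qdens hu hv, ← hm]
    rw [← hcm]; ring
  have hup : u ^ p ≤ c ^ p * m := by
    have he : u ^ p = c ^ p * m ^ p := by
      rw [← Real.mul_rpow hc0.le hm0.le, hcm]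
    rw [he]
    apply mul_le_mul_of_nonneg_left _ (Real.rpow_nonneg hc0.le p)
    calc m ^ p ≤ m ^ (1:ℝ) := Real.rpow_le_rpow_of_exponent_ge hm0 hm1 (by linarith)
      _ = m := Real.rpow_one m
  linarith [hle, hlhs ▸ hle, hup]

lemma Qdens_withDensity_integrable_iff (hw : 0 < w) (hz : 0 < z) (g : ℝ → ℝ)
    (hg : Measurable g) :
    Integrable g ((volume.restrict (Ioi 0)).withDensity fun t => ENNReal.ofReal (Qdens w z t))
      ↔ IntegrableOn (fun t => g t * Qdens w z t) (Ioi 0) := by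
  have hf : Measurable fun t => ENNReal.ofReal (Qdens w z t) :=
    ENNReal.measurable_ofReal.comp (Qdens_continuous hw hz).measurable
  rw [integrable_withDensity_iff hf (Filter.Eventually.of_forall fun x => ENNReal.ofReal_lt_top)]
  have hae : (fun x => g x * (ENNReal.ofReal (Qdens w z x)).toReal)
      =ᵐ[volume.restrict (Ioi 0)] fun x => g x * Qdens w z x := by
    filter_upwards [ae_restrict_mem measurableSet_Ioi] with t ht
    rw [ENNReal.toReal_ofReal (Qdens_nonneg hw hz (le_of_lt ht))]
  exact ⟨fun h => h.congr hae, fun h => h.congr hae.symm⟩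

lemma Qdens_withDensity_integral (hw : 0 < w) (hz : 0 < z) (g : ℝ → ℝ) :
    ∫ t, g t ∂((volume.restrict (Ioi 0)).withDensity fun t => ENNReal.ofReal (Qdens w z t))
      = ∫ t in Ioi 0, g t * Qdens w z t := by
  have he : (fun t => ENNReal.ofReal (Qdens w z t))
      = fun t => ((Qdens w z t).toNNReal : ℝ≥0∞) := rfl
  rw [he, integral_withDensity_eq_integral_smul
    ((Qdens_continuous hw hz).measurable.real_toNNReal) g]
  apply integral_congr_ae
  filter_upwards [ae_restrict_mem measurableSet_Ioi] with t ht
  rw [NNReal.smul_def, smul_eq_mul, Real.coe_toNNReal _ (Qdens_nonneg hw hz (le_of_lt ht))]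
  ring


end Aux

/-- For `p ∈ (1,2)` and `u, v > 0`, the `p`-th moment of each coordinate under the
harmonic measure dominates the `p`-th power of the starting coordinate:
`∫ y₁^p Q_{(u,v)}(dy) ≥ u^p` and `∫ y₂^p Q_{(u,v)}(dy) ≥ v^p`. -/
theorem harmonic_measure_moment_lower_bound (p : ℝ) (hp1 : 1 < p) (hp2 : p < 2)
    (u v : ℝ) (hu : 0 < u) (hv : 0 < v) :
    u ^ p ≤ (∫ y, y.1 ^ p ∂(Qmeas (u, v)))
      ∧ v ^ p ≤ (∫ y, y.2 ^ p ∂(Qmeas (u, v))) := by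
  have hp0 : (0:ℝ) ≤ p := by linarith
  have hpne : p ≠ 0 := by linarith
  have hrpm : Measurable (fun t : ℝ => t ^ p) :=
    (Real.continuous_rpow_const hp0).measurable
  have h0p : ((0:ℝ) ^ p) = 0 := Real.zero_rpow hpne
  set ν₁ : Measure ℝ :=
    (volume.restrict (Ioi 0)).withDensity fun t => ENNReal.ofReal (Qdens u v t) with hν₁
  set ν₂ : Measure ℝ :=
    (volume.restrict (Ioi 0)).withDensity fun t => ENNReal.ofReal (Qdens v u t) with hν₂
  have hQ : Qmeas (u, v) = Measure.map (fun t => (t, (0:ℝ))) ν₁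
      + Measure.map (fun t => ((0:ℝ), t)) ν₂ := by
    rw [Qmeas, if_pos ⟨hu, hv⟩]
  -- first coordinate
  have hInt1 : Integrable (fun y : ℝ × ℝ => y.1 ^ p) (Measure.map (fun t => (t, (0:ℝ))) ν₁) := by
    rw [(measurableEmbedding_prod_mk_right (0:ℝ)).integrable_map_iff]
    exact (Qdens_withDensity_integrable_iff hu hv _ hrpm).2
      (rpow_Qdens_integrableOn hp1 hp2 hu hv)
  have hInt2 : Integrable (fun y : ℝ × ℝ => y.1 ^ p) (Measure.map (fun t => ((0:ℝ), t)) ν₂) := by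
    rw [(measurableEmbedding_prodMk_left (0:ℝ)).integrable_map_iff]
    have : ((fun y : ℝ × ℝ => y.1 ^ p) ∘ (Prod.mk (0:ℝ))) = fun _ : ℝ => (0:ℝ) := by
      funext t; simp [Function.comp, h0p]
    rw [this]
    exact integrable_zero _ _ _
  have hInt1' : Integrable (fun y : ℝ × ℝ => y.2 ^ p) (Measure.map (fun t => (t, (0:ℝ))) ν₁) := by
    rw [(measurableEmbedding_prod_mk_right (0:ℝ)).integrable_map_iff]
    have : ((fun y : ℝ × ℝ => y.2 ^ p) ∘ (fun t : ℝ => (t, (0:ℝ)))) = fun _ : ℝ => (0:ℝ) := by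
      funext t; simp [Function.comp, h0p]
    rw [this]
    exact integrable_zero _ _ _
  have hInt2' : Integrable (fun y : ℝ × ℝ => y.2 ^ p) (Measure.map (fun t => ((0:ℝ), t)) ν₂) := by
    rw [(measurableEmbedding_prodMk_left (0:ℝ)).integrable_map_iff]
    exact (Qdens_withDensity_integrable_iff hv hu _ hrpm).2
      (rpow_Qdens_integrableOn hp1 hp2 hv hu)
  have hmap1 : AEMeasurable (fun t : ℝ => (t, (0:ℝ))) ν₁ :=
    (measurable_id.prodMk measurable_const).aemeasurable
  have hmap2 : AEMeasurable (fun t : ℝ => ((0:ℝ), t)) ν₂ :=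
    (measurable_const.prodMk measurable_id).aemeasurable
  have hsm1 : AEStronglyMeasurable (fun y : ℝ × ℝ => y.1 ^ p)
      (Measure.map (fun t : ℝ => (t, (0:ℝ))) ν₁) :=
    (hrpm.comp measurable_fst).aestronglyMeasurable
  have hsm2 : AEStronglyMeasurable (fun y : ℝ × ℝ => y.1 ^ p)
      (Measure.map (fun t : ℝ => ((0:ℝ), t)) ν₂) :=
    (hrpm.comp measurable_fst).aestronglyMeasurable
  have hsm1' : AEStronglyMeasurable (fun y : ℝ × ℝ => y.2 ^ p)
      (Measure.map (fun t : ℝ => (t, (0:ℝ))) ν₁) :=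
    (hrpm.comp measurable_snd).aestronglyMeasurable
  have hsm2' : AEStronglyMeasurable (fun y : ℝ × ℝ => y.2 ^ p)
      (Measure.map (fun t : ℝ => ((0:ℝ), t)) ν₂) :=
    (hrpm.comp measurable_snd).aestronglyMeasurable
  constructor
  · rw [hQ, integral_add_measure hInt1 hInt2, integral_map hmap1 hsm1, integral_map hmap2 hsm2]
    simp only [h0p]
    rw [integral_zero, add_zero, Qdens_withDensity_integral hu hv]
    exact moment_lower hp1 hp2 hu hv
  · rw [hQ, integral_add_measure hInt1' hInt2', integral_map hmap1 hsm1', integral_map hmap2 hsm2']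
    simp only [h0p]
    rw [integral_zero, zero_add, Qdens_withDensity_integral hv hu]
    exact moment_lower hp1 hp2 hv hu
end

section
/- For every p ∈ (1,2), there exists a finite constant C_p such that for all real numbers u, v > 0 and for i = 1, 2 (writing x = (u,v)): ∫ |y_i − x_i|^p Q_{(u,v)}(dy) ≤ C_p · min(u^{p−1}·v, u·v^{p−1}) ≤ C_p · (uv)^{p/2}. -/
open MeasureTheory Real Set

lemma qdens_continuous' {u v : ℝ} (hu : 0 < u) (hv : 0 < v) : Continuous (Qdens u v) := by
  unfold Qdens
  apply Continuous.div (by continuity) (by continuity)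
  intro t
  have h1 : 0 < 4 * u ^ 2 * v ^ 2 := by positivity
  nlinarith [sq_nonneg (t ^ 2 + v ^ 2 - u ^ 2)]

lemma integral_Qmeas {u v : ℝ} (hu : 0 < u) (hv : 0 < v) {G : ℝ × ℝ → ℝ}
    (hG : Continuous G) (hG0 : ∀ y, 0 ≤ G y) :
    ∫ y, G y ∂(Qmeas (u, v))
      = ((∫⁻ t in Ioi (0:ℝ), ENNReal.ofReal (Qdens u v t) * ENNReal.ofReal (G (t, 0)))
        + ∫⁻ t in Ioi (0:ℝ), ENNReal.ofReal (Qdens v u t) * ENNReal.ofReal (G (0, t))).toReal := by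
  have hQ : Qmeas (u, v)
      = Measure.map (fun t => (t, (0 : ℝ)))
          ((volume.restrict (Ioi (0 : ℝ))).withDensity fun t => ENNReal.ofReal (Qdens u v t))
        + Measure.map (fun t => ((0 : ℝ), t))
          ((volume.restrict (Ioi (0 : ℝ))).withDensity fun t => ENNReal.ofReal (Qdens v u t)) := by
    simp only [Qmeas]
    rw [if_pos (⟨hu, hv⟩ : 0 < (u, v).1 ∧ 0 < (u, v).2)]
  rw [hQ, integral_eq_lintegral_of_nonneg_ae (ae_of_all _ hG0) hG.aestronglyMeasurable]
  congr 1
  rw [lintegral_add_measure]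
  have hGm : Measurable fun y : ℝ × ℝ => ENNReal.ofReal (G y) := hG.measurable.ennreal_ofReal
  have hQ1 : Measurable fun t => ENNReal.ofReal (Qdens u v t) :=
    ((qdens_continuous' hu hv).measurable).ennreal_ofReal
  have hQ2 : Measurable fun t => ENNReal.ofReal (Qdens v u t) :=
    ((qdens_continuous' hv hu).measurable).ennreal_ofReal
  have hm1 : Measurable fun t : ℝ => (t, (0 : ℝ)) := by fun_prop
  have hm2 : Measurable fun t : ℝ => ((0 : ℝ), t) := by fun_prop
  rw [lintegral_map hGm hm1, lintegral_map hGm hm2,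
    lintegral_withDensity_eq_lintegral_mul _ hQ1
      (show Measurable fun t : ℝ => ENNReal.ofReal (G (t, 0)) from hGm.comp hm1),
    lintegral_withDensity_eq_lintegral_mul _ hQ2
      (show Measurable fun t : ℝ => ENNReal.ofReal (G (0, t)) from hGm.comp hm2)]
  rfl

lemma lint_bound {S : Set ℝ} (hS : MeasurableSet S) {f g : ℝ → ℝ} {B : ℝ}
    (hfg : ∀ t ∈ S, f t ≤ g t) (hg0 : ∀ t ∈ S, 0 ≤ g t)
    (hgi : IntegrableOn g S) (hB : ∫ t in S, g t ≤ B) :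
    ∫⁻ t in S, ENNReal.ofReal (f t) ≤ ENNReal.ofReal B := by
  calc ∫⁻ t in S, ENNReal.ofReal (f t)
      ≤ ∫⁻ t in S, ENNReal.ofReal (g t) :=
        setLIntegral_mono' hS fun t ht => ENNReal.ofReal_le_ofReal (hfg t ht)
    _ = ENNReal.ofReal (∫ t in S, g t) :=
        (ofReal_integral_eq_lintegral_ofReal hgi
          ((ae_restrict_iff' hS).2 (ae_of_all _ hg0))).symm
    _ ≤ ENNReal.ofReal B := ENNReal.ofReal_le_ofReal hB

lemma intOn_rpow_left {r : ℝ} (hr : -1 < r) {a b : ℝ} (hab : a ≤ b) :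
    IntegrableOn (fun t => (b - t) ^ r) (Ioc a b) := by
  have h := (intervalIntegral.intervalIntegrable_rpow' hr (a := 0) (b := b - a)).comp_sub_left b
  simp only [sub_zero, sub_sub_cancel] at h
  exact (intervalIntegrable_iff_integrableOn_Ioc_of_le hab).mp h.symm

lemma int_rpow_left {r : ℝ} (hr : -1 < r) (hr' : r ≠ -1) {a b : ℝ} (hab : a ≤ b) :
    ∫ t in Ioc a b, (b - t) ^ r = (b - a) ^ (r + 1) / (r + 1) := by
  rw [← intervalIntegral.integral_of_le hab,
    intervalIntegral.integral_comp_sub_left (fun x => x ^ r) b, sub_self]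
  rw [integral_rpow (Or.inl hr)]
  rw [Real.zero_rpow (by intro h; apply hr'; linarith [h])]
  ring

lemma intOn_rpow_right {r : ℝ} (hr : -1 < r) {a b : ℝ} (hab : a ≤ b) :
    IntegrableOn (fun t => (t - a) ^ r) (Ioc a b) := by
  have h := (intervalIntegral.intervalIntegrable_rpow' hr (a := 0) (b := b - a)).comp_sub_right a
  simp only [zero_add, sub_add_cancel] at h
  exact (intervalIntegrable_iff_integrableOn_Ioc_of_le hab).mp h

lemma int_rpow_right {r : ℝ} (hr : -1 < r) (hr' : r ≠ -1) {a b : ℝ} (hab : a ≤ b) :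
    ∫ t in Ioc a b, (t - a) ^ r = (b - a) ^ (r + 1) / (r + 1) := by
  rw [← intervalIntegral.integral_of_le hab,
    intervalIntegral.integral_comp_sub_right (fun x => x ^ r) a, sub_self]
  rw [integral_rpow (Or.inl hr)]
  rw [Real.zero_rpow (by intro h; apply hr'; linarith [h])]
  ring

lemma cauchy_integrable {u : ℝ} (hu : 0 < u) (v : ℝ) :
    Integrable (fun t : ℝ => ((t - v) ^ 2 + u ^ 2)⁻¹) := by
  have h1 : Integrable (fun x : ℝ => (u ^ 2)⁻¹ * (1 + x ^ 2)⁻¹) :=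
    integrable_inv_one_add_sq.const_mul _
  have h2 := (h1.comp_mul_left' (R := u⁻¹) (by positivity)).comp_sub_right v
  apply h2.congr
  filter_upwards with t
  have : (u⁻¹ * (t - v)) ^ 2 = (t - v) ^ 2 / u ^ 2 := by
    rw [mul_pow]; field_simp
  rw [this]
  field_simp
  rw [add_comm]

lemma cauchy_integral_le {u : ℝ} (hu : 0 < u) (v : ℝ) :
    ∫ t : ℝ, ((t - v) ^ 2 + u ^ 2)⁻¹ = π / u := by
  have h1 : ∫ t : ℝ, ((t - v) ^ 2 + u ^ 2)⁻¹
      = ∫ t : ℝ, ((t : ℝ) ^ 2 + u ^ 2)⁻¹ :=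
    integral_sub_right_eq_self (fun t : ℝ => (t ^ 2 + u ^ 2)⁻¹) v
  have h2 : ∀ t : ℝ, ((t : ℝ) ^ 2 + u ^ 2)⁻¹ = (u ^ 2)⁻¹ * (1 + (u⁻¹ * t) ^ 2)⁻¹ := by
    intro t
    rw [mul_pow]
    field_simp
    rw [add_comm]
  rw [h1]
  simp_rw [h2]
  rw [integral_const_mul, Measure.integral_comp_mul_left
      (fun x : ℝ => (1 + x ^ 2)⁻¹) u⁻¹, integral_univ_inv_one_add_sq]
  rw [smul_eq_mul, inv_inv, abs_of_pos hu]
  field_simp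

lemma qdens_rewrite (u v t : ℝ) :
    Qdens u v t = 4 / π * (u * v * t) / (((t - u) ^ 2 + v ^ 2) * ((t + u) ^ 2 + v ^ 2)) := by
  unfold Qdens
  rw [show 4 * u ^ 2 * v ^ 2 + (t ^ 2 + v ^ 2 - u ^ 2) ^ 2
      = ((t - u) ^ 2 + v ^ 2) * ((t + u) ^ 2 + v ^ 2) from by ring]

lemma qdens_nonneg {u v t : ℝ} (hu : 0 ≤ u) (hv : 0 ≤ v) (ht : 0 ≤ t) :
    0 ≤ Qdens u v t := by
  have hπ := Real.pi_pos
  unfold Qdens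
  apply div_nonneg (by positivity)
  positivity

lemma qdens_continuous {u v : ℝ} (hu : 0 < u) (hv : 0 < v) : Continuous (Qdens u v) := by
  unfold Qdens
  apply Continuous.div (by continuity) (by continuity)
  intro t
  have h1 : 0 < 4 * u ^ 2 * v ^ 2 := by positivity
  nlinarith [sq_nonneg (t ^ 2 + v ^ 2 - u ^ 2)]

lemma near_bound {p u v m t : ℝ} (hp1 : 1 < p) (hp2 : p < 2)
    (hu : 0 < u) (hv : 0 < v) (hm : m = max u v) (ht0 : 0 < t) (ht2 : t ≤ 2 * m) :
    Qdens u v t * |t - u| ^ p ≤ 8 / π * (u * v / m) * |t - u| ^ (p - 2) := by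
  have hπ := Real.pi_pos
  have hmpos : 0 < m := hm ▸ lt_max_iff.mpr (Or.inl hu)
  rcases eq_or_ne t u with rfl | htu
  · rw [sub_self, abs_zero, Real.zero_rpow (by linarith : p ≠ 0),
      Real.zero_rpow (by intro h; linarith [h] : p - 2 ≠ 0), mul_zero, mul_zero]
  · have habs : 0 < |t - u| := abs_pos.mpr (sub_ne_zero.mpr htu)
    rw [qdens_rewrite, div_mul_eq_mul_div]
    have key : |t - u| ^ 2 * m ^ 2 ≤ ((t - u) ^ 2 + v ^ 2) * ((t + u) ^ 2 + v ^ 2) := by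
      have h1 : |t - u| ^ 2 ≤ (t - u) ^ 2 + v ^ 2 := by rw [sq_abs]; nlinarith [sq_nonneg v]
      have h2 : m ^ 2 ≤ (t + u) ^ 2 + v ^ 2 := by
        rcases max_cases u v with ⟨h, _⟩ | ⟨h, _⟩ <;> rw [hm, h] <;> nlinarith
      exact mul_le_mul h1 h2 (by positivity) (by positivity)
    calc 4 / π * (u * v * t) * |t - u| ^ p / (((t - u) ^ 2 + v ^ 2) * ((t + u) ^ 2 + v ^ 2))
        ≤ 4 / π * (u * v * (2 * m)) * |t - u| ^ p / (|t - u| ^ 2 * m ^ 2) := by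
          apply div_le_div₀ (by positivity) ?_ (by positivity) key
          have : 0 ≤ |t - u| ^ p := Real.rpow_nonneg (abs_nonneg _) p
          gcongr
      _ = 8 / π * (u * v / m) * |t - u| ^ (p - 2) := by
          obtain ⟨w, hw, hwpos⟩ : ∃ w, |t - u| = w ∧ 0 < w := ⟨_, rfl, habs⟩
          rw [hw, show w ^ (p - 2) = w ^ p / w ^ (2 : ℕ) from by
            rw [← Real.rpow_natCast w 2, ← Real.rpow_sub hwpos]; norm_num]
          field_simp
          ring

lemma far_bound {p a b m s t : ℝ} (hp1 : 1 < p) (hp2 : p < 2)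
    (ha : 0 < a) (hb : 0 < b) (hmab : max a b ≤ m) (hmpos : 0 < m) (ht : 2 * m < t)
    (hs0 : 0 ≤ s) (hst : s ≤ t) :
    Qdens a b t * s ^ p ≤ 16 / π * (a * b) * t ^ (p - 3) := by
  have hπ := Real.pi_pos
  have ht0 : 0 < t := by linarith
  have ham : a ≤ m := le_trans (le_max_left a b) hmab
  rw [qdens_rewrite, div_mul_eq_mul_div]
  have hd : t ^ 2 / 4 * t ^ 2 ≤ ((t - a) ^ 2 + b ^ 2) * ((t + a) ^ 2 + b ^ 2) := by
    have h1 : t ^ 2 / 4 ≤ (t - a) ^ 2 + b ^ 2 := by nlinarith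
    have h2 : t ^ 2 ≤ (t + a) ^ 2 + b ^ 2 := by nlinarith
    exact mul_le_mul h1 h2 (by positivity) (by positivity)
  have hnum : 4 / π * (a * b * t) * s ^ p ≤ 4 / π * (a * b * t) * t ^ p := by
    have : s ^ p ≤ t ^ p := Real.rpow_le_rpow hs0 hst (by linarith)
    gcongr
  calc 4 / π * (a * b * t) * s ^ p / (((t - a) ^ 2 + b ^ 2) * ((t + a) ^ 2 + b ^ 2))
      ≤ 4 / π * (a * b * t) * t ^ p / (t ^ 2 / 4 * t ^ 2) :=
        div_le_div₀ (by positivity) hnum (by positivity) hd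
    _ = 16 / π * (a * b) * t ^ (p - 3) := by
        rw [show t ^ (p - 3) = t ^ p / t ^ (3 : ℕ) from ?_]
        · field_simp; ring
        · rw [← Real.rpow_natCast t 3, ← Real.rpow_sub ht0]; norm_num

lemma massnear_bound {p u v m t : ℝ} (hp1 : 1 < p) (hu : 0 < u) (hv : 0 < v)
    (hm : m = max u v) (ht0 : 0 < t) (ht2 : t ≤ 2 * m) :
    Qdens v u t * |(0:ℝ) - u| ^ p ≤ 8 / π * (u * v * u ^ p / m) * ((t - v) ^ 2 + u ^ 2)⁻¹ := by
  have hπ := Real.pi_pos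
  have hmpos : 0 < m := hm ▸ lt_max_iff.mpr (Or.inl hu)
  have habs : |(0:ℝ) - u| = u := by rw [zero_sub, abs_neg, abs_of_pos hu]
  rw [habs, qdens_rewrite, div_mul_eq_mul_div]
  have hd : ((t - v) ^ 2 + u ^ 2) * m ^ 2
      ≤ ((t - v) ^ 2 + u ^ 2) * ((t + v) ^ 2 + u ^ 2) := by
    apply mul_le_mul_of_nonneg_left ?_ (by positivity)
    rcases max_cases u v with ⟨h, _⟩ | ⟨h, _⟩ <;> rw [hm, h] <;> nlinarith
  have hup : 0 ≤ u ^ p := Real.rpow_nonneg hu.le p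
  calc 4 / π * (v * u * t) * u ^ p / (((t - v) ^ 2 + u ^ 2) * ((t + v) ^ 2 + u ^ 2))
      ≤ 4 / π * (v * u * (2 * m)) * u ^ p / (((t - v) ^ 2 + u ^ 2) * m ^ 2) := by
        apply div_le_div₀ (by positivity) ?_ (by positivity) hd
        gcongr
    _ = 8 / π * (u * v * u ^ p / m) * ((t - v) ^ 2 + u ^ 2)⁻¹ := by
        field_simp; ring

lemma min_eq_muvE {p : ℝ} (hp2 : p ≤ 2) {u v : ℝ} (hu : 0 < u) (hv : 0 < v) :
    min (u ^ (p - 1) * v) (u * v ^ (p - 1)) = u * v * (max u v) ^ (p - 2) := by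
  have key : ∀ w : ℝ, 0 < w → w ^ (p - 1) = w * w ^ (p - 2) := by
    intro w hw
    rw [show p - 1 = 1 + (p - 2) from by ring, Real.rpow_add hw, Real.rpow_one]
  rcases le_total u v with h | h
  · rw [max_eq_right h, min_eq_right, key v hv]; · ring
    have h1 : v ^ (p - 2) ≤ u ^ (p - 2) :=
      Real.rpow_le_rpow_of_nonpos hu h (by linarith)
    calc u * v ^ (p - 1) = (u * v) * v ^ (p - 2) := by rw [key v hv]; ring
      _ ≤ (u * v) * u ^ (p - 2) := by
          apply mul_le_mul_of_nonneg_left h1 (by positivity)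
      _ = u ^ (p - 1) * v := by rw [key u hu]; ring
  · rw [max_eq_left h, min_eq_left, key u hu]; · ring
    have h1 : u ^ (p - 2) ≤ v ^ (p - 2) :=
      Real.rpow_le_rpow_of_nonpos hv h (by linarith)
    calc u ^ (p - 1) * v = (u * v) * u ^ (p - 2) := by rw [key u hu]; ring
      _ ≤ (u * v) * v ^ (p - 2) := by
          apply mul_le_mul_of_nonneg_left h1 (by positivity)
      _ = u * v ^ (p - 1) := by rw [key v hv]; ring

lemma muvE_le_geom {p : ℝ} (hp2 : p ≤ 2) {u v : ℝ} (hu : 0 < u) (hv : 0 < v) :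
    u * v * (max u v) ^ (p - 2) ≤ (u * v) ^ (p / 2) := by
  have hm : 0 < max u v := lt_max_iff.mpr (Or.inl hu)
  have huv : 0 < u * v := mul_pos hu hv
  have h1 : (u * v) ^ ((2 - p) / 2) ≤ (max u v) ^ (2 - p) := by
    have huvm : u * v ≤ (max u v) ^ 2 := by
      rcases max_cases u v with ⟨h, h'⟩ | ⟨h, h'⟩ <;> rw [h] <;> nlinarith
    calc (u * v) ^ ((2 - p) / 2) ≤ ((max u v) ^ 2) ^ ((2 - p) / 2) :=
          Real.rpow_le_rpow huv.le huvm (by linarith)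
      _ = (max u v) ^ (2 - p) := by
          rw [← Real.rpow_natCast (max u v) 2, ← Real.rpow_mul hm.le]
          congr 1; push_cast; ring
  have h2 : (max u v) ^ (p - 2) = ((max u v) ^ (2 - p))⁻¹ := by
    rw [← Real.rpow_neg hm.le]; congr 1; ring
  have h3 : (u * v) ^ (p / 2) = (u * v) / (u * v) ^ ((2 - p) / 2) := by
    rw [eq_div_iff (by positivity), ← Real.rpow_add huv]
    rw [show p / 2 + (2 - p) / 2 = 1 from by ring, Real.rpow_one]
  rw [h2, h3, ← div_eq_mul_inv]
  exact div_le_div_of_nonneg_left huv.le (by positivity) h1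

section KEYSEC

set_option maxHeartbeats 1000000 in
lemma KEY (p : ℝ) (hp1 : 1 < p) (hp2 : p < 2) (u v : ℝ) (hu : 0 < u) (hv : 0 < v) :
    (∫⁻ t in Ioi (0:ℝ), ENNReal.ofReal (Qdens u v t) * ENNReal.ofReal (|t - u| ^ p))
      + ∫⁻ t in Ioi (0:ℝ), ENNReal.ofReal (Qdens v u t) * ENNReal.ofReal (|(0:ℝ) - u| ^ p)
    ≤ ENNReal.ofReal ((32 / (π * (p - 1)) + 32 / (π * (2 - p)) + 8)
        * (u * v * (max u v) ^ (p - 2))) := by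
  have hπ := Real.pi_pos
  set m := max u v with hm
  have hmpos : 0 < m := lt_max_iff.mpr (Or.inl hu)
  have hum : u ≤ m := le_max_left u v
  have hvm : v ≤ m := le_max_right u v
  have h2m : 0 < 2 * m := by linarith
  have hu2m : u ≤ 2 * m := by linarith
  set E := m ^ (p - 2) with hE
  have hE0 : 0 ≤ E := Real.rpow_nonneg hmpos.le _
  have hmE : m ^ (p - 1) = m * E := by
    rw [hE, show p - 1 = 1 + (p - 2) from by ring, Real.rpow_add hmpos, Real.rpow_one]
  have h2le : (2:ℝ) ^ (p - 1) ≤ 2 := by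
    calc (2:ℝ) ^ (p - 1) ≤ (2:ℝ) ^ (1:ℝ) :=
        Real.rpow_le_rpow_of_exponent_le one_le_two (by linarith)
      _ = 2 := Real.rpow_one 2
  have h2mp1 : (2 * m) ^ (p - 1) ≤ 2 * (m * E) := by
    rw [Real.mul_rpow (by norm_num) hmpos.le, hmE]
    exact mul_le_mul_of_nonneg_right h2le (mul_nonneg hmpos.le hE0)
  have hu1 : u ^ (p - 1) ≤ 2 * (m * E) :=
    le_trans (Real.rpow_le_rpow hu.le hu2m (by linarith)) h2mp1
  have h2mu : (2 * m - u) ^ (p - 1) ≤ 2 * (m * E) :=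
    le_trans (Real.rpow_le_rpow (by linarith) (by linarith) (by linarith)) h2mp1
  have hfarE : (2 * m) ^ (p - 2) ≤ E := by
    rw [Real.mul_rpow (by norm_num) hmpos.le, hE]
    have h1 : (2:ℝ) ^ (p - 2) ≤ 1 :=
      Real.rpow_le_one_of_one_le_of_nonpos one_le_two (by linarith)
    calc (2:ℝ) ^ (p - 2) * m ^ (p - 2) ≤ 1 * m ^ (p - 2) :=
        mul_le_mul_of_nonneg_right h1 (Real.rpow_nonneg hmpos.le _)
      _ = m ^ (p - 2) := one_mul _
  have hup : u ^ p ≤ u * (m * E) := by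
    have e : u ^ p = u * u ^ (p - 1) := by
      have h := Real.rpow_add hu 1 (p - 1)
      rw [show 1 + (p - 1) = p from by ring, Real.rpow_one] at h
      exact h
    rw [e]
    have h1 : u ^ (p - 1) ≤ m ^ (p - 1) := Real.rpow_le_rpow hu.le hum (by linarith)
    rw [hmE] at h1
    exact mul_le_mul_of_nonneg_left h1 hu.le
  -- nonnegativity of constants
  have c1 : (0:ℝ) ≤ 16 / (π * (p - 1)) * (u * v * E) :=
    mul_nonneg (div_nonneg (by norm_num) (mul_nonneg hπ.le (by linarith)))
      (mul_nonneg (by positivity) hE0)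
  have c2 : (0:ℝ) ≤ 16 / (π * (2 - p)) * (u * v * E) :=
    mul_nonneg (div_nonneg (by norm_num) (mul_nonneg hπ.le (by linarith)))
      (mul_nonneg (by positivity) hE0)
  have c3 : (0:ℝ) ≤ 8 * (u * v * E) := mul_nonneg (by norm_num) (mul_nonneg (by positivity) hE0)
  have hne1 : p - 1 ≠ 0 := sub_ne_zero.mpr hp1.ne'
  have hne2 : (2:ℝ) - p ≠ 0 := sub_ne_zero.mpr hp2.ne'
  have hπne : π ≠ 0 := hπ.ne'
  have hmne : m ≠ 0 := hmpos.ne'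
  have hcoefA : (0:ℝ) ≤ 8 / π * (u * v / m) :=
    mul_nonneg (by positivity) (div_nonneg (by positivity) hmpos.le)
  have hcoefC : (0:ℝ) ≤ 16 / π * (u * v) := by positivity
  have hcoefC' : (0:ℝ) ≤ 16 / π * (v * u) := by positivity
  have hcoefD : (0:ℝ) ≤ 8 / π * (u * v * u ^ p / m) :=
    mul_nonneg (by positivity) (div_nonneg (by positivity) hmpos.le)
  -- rewrite integrands as single ofReal
  have hint1 : (∫⁻ t in Ioi (0:ℝ), ENNReal.ofReal (Qdens u v t) * ENNReal.ofReal (|t - u| ^ p))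
      = ∫⁻ t in Ioi (0:ℝ), ENNReal.ofReal (Qdens u v t * |t - u| ^ p) := by
    apply setLIntegral_congr_fun measurableSet_Ioi
    intro t ht; beta_reduce
    rw [ENNReal.ofReal_mul (qdens_nonneg hu.le hv.le (le_of_lt ht))]
  have hint2 : (∫⁻ t in Ioi (0:ℝ), ENNReal.ofReal (Qdens v u t) * ENNReal.ofReal (|(0:ℝ) - u| ^ p))
      = ∫⁻ t in Ioi (0:ℝ), ENNReal.ofReal (Qdens v u t * |(0:ℝ) - u| ^ p) := by
    apply setLIntegral_congr_fun measurableSet_Ioi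
    intro t ht; beta_reduce
    rw [ENNReal.ofReal_mul (qdens_nonneg hv.le hu.le (le_of_lt ht))]
  -- splits
  have split1 : (∫⁻ t in Ioi (0:ℝ), ENNReal.ofReal (Qdens u v t * |t - u| ^ p))
      ≤ (∫⁻ t in Ioc (0:ℝ) u, ENNReal.ofReal (Qdens u v t * |t - u| ^ p))
        + (∫⁻ t in Ioc u (2*m), ENNReal.ofReal (Qdens u v t * |t - u| ^ p))
        + ∫⁻ t in Ioi (2*m), ENNReal.ofReal (Qdens u v t * |t - u| ^ p) := by
    have hsub : Ioi (0:ℝ) ⊆ Ioc 0 u ∪ Ioc u (2*m) ∪ Ioi (2*m) := by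
      rw [Ioc_union_Ioc_eq_Ioc hu.le hu2m, Ioc_union_Ioi_eq_Ioi h2m.le]
    exact le_trans (lintegral_mono_set hsub) (le_trans (lintegral_union_le _ _ _)
      (add_le_add_left (lintegral_union_le _ _ _) _))
  have split2 : (∫⁻ t in Ioi (0:ℝ), ENNReal.ofReal (Qdens v u t * |(0:ℝ) - u| ^ p))
      ≤ (∫⁻ t in Ioc (0:ℝ) (2*m), ENNReal.ofReal (Qdens v u t * |(0:ℝ) - u| ^ p))
        + ∫⁻ t in Ioi (2*m), ENNReal.ofReal (Qdens v u t * |(0:ℝ) - u| ^ p) := by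
    have hsub : Ioi (0:ℝ) ⊆ Ioc 0 (2*m) ∪ Ioi (2*m) := by
      rw [Ioc_union_Ioi_eq_Ioi h2m.le]
    exact le_trans (lintegral_mono_set hsub) (lintegral_union_le _ _ _)
  -- piece A
  have pA : (∫⁻ t in Ioc (0:ℝ) u, ENNReal.ofReal (Qdens u v t * |t - u| ^ p))
      ≤ ENNReal.ofReal (16 / (π * (p - 1)) * (u * v * E)) := by
    apply lint_bound measurableSet_Ioc
      (g := fun t => 8 / π * (u * v / m) * (u - t) ^ (p - 2))
    · intro t ht
      have h1 := near_bound hp1 hp2 hu hv hm ht.1 (le_trans ht.2 hu2m)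
      rwa [show |t - u| ^ (p - 2) = (u - t) ^ (p - 2) from by
        rw [abs_sub_comm, abs_of_nonneg (by linarith [ht.2] : (0:ℝ) ≤ u - t)]] at h1
    · intro t ht
      exact mul_nonneg (by positivity) (Real.rpow_nonneg (by linarith [ht.2]) _)
    · exact (intOn_rpow_left (by linarith) hu.le).const_mul _
    · rw [integral_const_mul, int_rpow_left (by linarith) (by intro h; linarith) hu.le]
      rw [sub_zero, show p - 2 + 1 = p - 1 from by ring]
      calc 8 / π * (u * v / m) * (u ^ (p - 1) / (p - 1))
          ≤ 8 / π * (u * v / m) * (2 * (m * E) / (p - 1)) :=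
            mul_le_mul_of_nonneg_left
              ((div_le_div_iff_of_pos_right (by linarith : (0:ℝ) < p - 1)).mpr hu1) hcoefA
        _ = 16 / (π * (p - 1)) * (u * v * E) := by field_simp; ring
  -- piece B
  have pB : (∫⁻ t in Ioc u (2*m), ENNReal.ofReal (Qdens u v t * |t - u| ^ p))
      ≤ ENNReal.ofReal (16 / (π * (p - 1)) * (u * v * E)) := by
    apply lint_bound measurableSet_Ioc
      (g := fun t => 8 / π * (u * v / m) * (t - u) ^ (p - 2))
    · intro t ht
      have h1 := near_bound hp1 hp2 hu hv hm (lt_trans hu ht.1) ht.2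
      rwa [show |t - u| ^ (p - 2) = (t - u) ^ (p - 2) from by
        rw [abs_of_nonneg (by linarith [ht.1] : (0:ℝ) ≤ t - u)]] at h1
    · intro t ht
      exact mul_nonneg (by positivity) (Real.rpow_nonneg (by linarith [ht.1]) _)
    · exact (intOn_rpow_right (by linarith) hu2m).const_mul _
    · rw [integral_const_mul, int_rpow_right (by linarith) (by intro h; linarith) hu2m]
      rw [show p - 2 + 1 = p - 1 from by ring]
      calc 8 / π * (u * v / m) * ((2 * m - u) ^ (p - 1) / (p - 1))
          ≤ 8 / π * (u * v / m) * (2 * (m * E) / (p - 1)) :=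
            mul_le_mul_of_nonneg_left
              ((div_le_div_iff_of_pos_right (by linarith : (0:ℝ) < p - 1)).mpr h2mu) hcoefA
        _ = 16 / (π * (p - 1)) * (u * v * E) := by field_simp; ring
  -- piece C
  have pC : (∫⁻ t in Ioi (2*m), ENNReal.ofReal (Qdens u v t * |t - u| ^ p))
      ≤ ENNReal.ofReal (16 / (π * (2 - p)) * (u * v * E)) := by
    apply lint_bound measurableSet_Ioi
      (g := fun t => 16 / π * (u * v) * t ^ (p - 3))
    · intro t ht
      exact far_bound hp1 hp2 hu hv (le_of_eq hm.symm) hmpos ht (abs_nonneg _)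
        (abs_le.mpr ⟨by simp only [mem_Ioi] at ht; linarith, by simp only [mem_Ioi] at ht; linarith⟩)
    · intro t ht
      simp only [mem_Ioi] at ht
      exact mul_nonneg (by positivity) (Real.rpow_nonneg (by linarith) _)
    · exact (integrableOn_Ioi_rpow_of_lt (by linarith) h2m).const_mul _
    · rw [integral_const_mul, integral_Ioi_rpow_of_lt (by linarith) h2m]
      have hv1 : -(2*m) ^ (p - 3 + 1) / (p - 3 + 1) = (2*m) ^ (p - 2) / (2 - p) := by
        rw [show p - 3 + 1 = p - 2 from by ring, div_eq_div_iff (by linarith) (by linarith)]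
        ring
      rw [hv1]
      calc 16 / π * (u * v) * ((2*m) ^ (p - 2) / (2 - p))
          ≤ 16 / π * (u * v) * (E / (2 - p)) :=
            mul_le_mul_of_nonneg_left
              ((div_le_div_iff_of_pos_right (by linarith : (0:ℝ) < 2 - p)).mpr hfarE) hcoefC
        _ = 16 / (π * (2 - p)) * (u * v * E) := by field_simp
  -- piece D
  have pD : (∫⁻ t in Ioc (0:ℝ) (2*m), ENNReal.ofReal (Qdens v u t * |(0:ℝ) - u| ^ p))
      ≤ ENNReal.ofReal (8 * (u * v * E)) := by
    apply lint_bound measurableSet_Ioc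
      (g := fun t => 8 / π * (u * v * u ^ p / m) * ((t - v) ^ 2 + u ^ 2)⁻¹)
    · intro t ht
      exact massnear_bound hp1 hu hv hm ht.1 ht.2
    · intro t ht; positivity
    · exact ((cauchy_integrable hu v).const_mul _).integrableOn
    · rw [integral_const_mul]
      have h1 : ∫ t in Ioc (0:ℝ) (2*m), ((t - v) ^ 2 + u ^ 2)⁻¹ ≤ π / u := by
        rw [← cauchy_integral_le hu v]
        exact setIntegral_le_integral (cauchy_integrable hu v)
          (ae_of_all _ fun t => by positivity)
      calc 8 / π * (u * v * u ^ p / m) * ∫ t in Ioc (0:ℝ) (2*m), ((t - v) ^ 2 + u ^ 2)⁻¹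
          ≤ 8 / π * (u * v * u ^ p / m) * (π / u) := mul_le_mul_of_nonneg_left h1 hcoefD
        _ = 8 * (v * u ^ p / m) := by field_simp
        _ ≤ 8 * (v * (u * (m * E)) / m) :=
            mul_le_mul_of_nonneg_left
              ((div_le_div_iff_of_pos_right hmpos).mpr (mul_le_mul_of_nonneg_left hup hv.le))
              (by norm_num)
        _ = 8 * (u * v * E) := by field_simp
  -- piece E
  have pE : (∫⁻ t in Ioi (2*m), ENNReal.ofReal (Qdens v u t * |(0:ℝ) - u| ^ p))
      ≤ ENNReal.ofReal (16 / (π * (2 - p)) * (u * v * E)) := by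
    apply lint_bound measurableSet_Ioi
      (g := fun t => 16 / π * (v * u) * t ^ (p - 3))
    · intro t ht
      have habs : |(0:ℝ) - u| = u := by rw [zero_sub, abs_neg, abs_of_pos hu]
      simp only [mem_Ioi] at ht
      rw [habs]
      exact far_bound hp1 hp2 hv hu (le_of_eq (by rw [max_comm])) hmpos ht
        hu.le (by linarith)
    · intro t ht
      simp only [mem_Ioi] at ht
      exact mul_nonneg (by positivity) (Real.rpow_nonneg (by linarith) _)
    · exact (integrableOn_Ioi_rpow_of_lt (by linarith) h2m).const_mul _
    · rw [integral_const_mul, integral_Ioi_rpow_of_lt (by linarith) h2m]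
      have hv1 : -(2*m) ^ (p - 3 + 1) / (p - 3 + 1) = (2*m) ^ (p - 2) / (2 - p) := by
        rw [show p - 3 + 1 = p - 2 from by ring, div_eq_div_iff (by linarith) (by linarith)]
        ring
      rw [hv1]
      calc 16 / π * (v * u) * ((2*m) ^ (p - 2) / (2 - p))
          ≤ 16 / π * (v * u) * (E / (2 - p)) :=
            mul_le_mul_of_nonneg_left
              ((div_le_div_iff_of_pos_right (by linarith : (0:ℝ) < 2 - p)).mpr hfarE) hcoefC'
        _ = 16 / (π * (2 - p)) * (u * v * E) := by field_simp
  -- assemble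
  rw [hint1, hint2]
  have b1 := le_trans split1 (add_le_add (add_le_add pA pB) pC)
  have b2 := le_trans split2 (add_le_add pD pE)
  calc (∫⁻ t in Ioi (0:ℝ), ENNReal.ofReal (Qdens u v t * |t - u| ^ p))
        + ∫⁻ t in Ioi (0:ℝ), ENNReal.ofReal (Qdens v u t * |(0:ℝ) - u| ^ p)
      ≤ (ENNReal.ofReal (16 / (π * (p - 1)) * (u * v * E))
          + ENNReal.ofReal (16 / (π * (p - 1)) * (u * v * E))
          + ENNReal.ofReal (16 / (π * (2 - p)) * (u * v * E)))
        + (ENNReal.ofReal (8 * (u * v * E))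
          + ENNReal.ofReal (16 / (π * (2 - p)) * (u * v * E))) := add_le_add b1 b2
    _ = ENNReal.ofReal (16 / (π * (p - 1)) * (u * v * E) + 16 / (π * (p - 1)) * (u * v * E)
          + 16 / (π * (2 - p)) * (u * v * E)
          + (8 * (u * v * E) + 16 / (π * (2 - p)) * (u * v * E))) := by
        rw [← ENNReal.ofReal_add c1 c1, ← ENNReal.ofReal_add (by linarith) c2,
          ← ENNReal.ofReal_add c3 c2, ← ENNReal.ofReal_add (by linarith) (by linarith)]
    _ ≤ ENNReal.ofReal ((32 / (π * (p - 1)) + 32 / (π * (2 - p)) + 8) * (u * v * E)) :=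
        ENNReal.ofReal_le_ofReal (le_of_eq (by ring))

end KEYSEC

/-- For every `p ∈ (1,2)` there is a finite constant `C_p` such that for all `u, v > 0`
(writing `x = (u,v)`) and `i = 1, 2`:
`∫ |y_i − x_i|^p Q_{(u,v)}(dy) ≤ C_p min(u^{p−1}v, uv^{p−1}) ≤ C_p (uv)^{p/2}`. -/
theorem harmonic_measure_centered_moment_bound (p : ℝ) (hp1 : 1 < p) (hp2 : p < 2) :
    ∃ C : ℝ, ∀ u v : ℝ, 0 < u → 0 < v →
      ((∫ y, |y.1 - u| ^ p ∂(Qmeas (u, v)))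
          ≤ C * min (u ^ (p - 1) * v) (u * v ^ (p - 1))
        ∧ (∫ y, |y.2 - v| ^ p ∂(Qmeas (u, v)))
          ≤ C * min (u ^ (p - 1) * v) (u * v ^ (p - 1)))
      ∧ C * min (u ^ (p - 1) * v) (u * v ^ (p - 1)) ≤ C * (u * v) ^ (p / 2) := by
  have hπ := Real.pi_pos
  refine ⟨32 / (π * (p - 1)) + 32 / (π * (2 - p)) + 8, fun u v hu hv => ?_⟩
  have hC : (0:ℝ) ≤ 32 / (π * (p - 1)) + 32 / (π * (2 - p)) + 8 := by
    have h1 : (0:ℝ) ≤ 32 / (π * (p - 1)) :=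
      div_nonneg (by norm_num) (mul_nonneg hπ.le (by linarith))
    have h2 : (0:ℝ) ≤ 32 / (π * (2 - p)) :=
      div_nonneg (by norm_num) (mul_nonneg hπ.le (by linarith))
    linarith
  have hmin := min_eq_muvE hp2.le hu hv
  have hM0 : (0:ℝ) ≤ u * v * (max u v) ^ (p - 2) :=
    mul_nonneg (by positivity) (Real.rpow_nonneg (le_trans hu.le (le_max_left u v)) _)
  refine ⟨⟨?_, ?_⟩, ?_⟩
  · have hG : Continuous fun y : ℝ × ℝ => |y.1 - u| ^ p :=
      Continuous.rpow_const ((continuous_fst.sub continuous_const).abs)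
        (fun y => Or.inr (by linarith))
    have hG0 : ∀ y : ℝ × ℝ, 0 ≤ |y.1 - u| ^ p := fun y => Real.rpow_nonneg (abs_nonneg _) p
    rw [integral_Qmeas hu hv hG hG0, hmin]
    apply ENNReal.toReal_le_of_le_ofReal (mul_nonneg hC hM0)
    simpa using KEY p hp1 hp2 u v hu hv
  · have hG : Continuous fun y : ℝ × ℝ => |y.2 - v| ^ p :=
      Continuous.rpow_const ((continuous_snd.sub continuous_const).abs)
        (fun y => Or.inr (by linarith))
    have hG0 : ∀ y : ℝ × ℝ, 0 ≤ |y.2 - v| ^ p := fun y => Real.rpow_nonneg (abs_nonneg _) p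
    rw [integral_Qmeas hu hv hG hG0, hmin]
    apply ENNReal.toReal_le_of_le_ofReal (mul_nonneg hC hM0)
    have h := KEY p hp1 hp2 v u hv hu
    rw [show v * u * (max v u) ^ (p - 2) = u * v * (max u v) ^ (p - 2) from by
      rw [max_comm, mul_comm v u]] at h
    rw [add_comm] at h
    simpa using h
  · rw [hmin]
    exact mul_le_mul_of_nonneg_left (muvE_le_geom hp2.le hu hv) hC
end
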